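/- Let Λ be a ℤ/2-graded-commutative ring, C an n×n matrix with entries in the odd part of Λ, and s an odd derivation of Λ (extended entrywise to matrices) such that s(C_{ij}) = (C²)_{ij} for all i,j. Then s(tr(C^{2m-1})) = 0 for all m ≥ 1, i.e., the odd traces tr(C^{2m-1}) are s-closed. -/

import Mathlib

section aux
variable {A : Type*} [Ring A] {P : A → Prop}

lemma lemSwap (hanti : ∀ a b, P a → P b → a * b = -(b * a)) :
    ∀ l : List A, (∀ x ∈ l, P x) → ∀ a, P a →
      (Odd l.length → a * l.prod = -(l.prod * a)) ∧
      (Even l.length → a * l.prod = l.prod * a) := by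
  intro l
  induction l with
  | nil => intro _ a _; simp
  | cons b t ih =>
    intro hl a ha
    have hb : P b := hl b (by simp)
    have ht : ∀ x ∈ t, P x := fun x hx => hl x (by simp [hx])
    obtain ⟨iho, ihe⟩ := ih ht a ha
    have key : a * (b :: t).prod = -(b * (a * t.prod)) := by
      rw [List.prod_cons, ← mul_assoc, hanti a b ha hb, neg_mul, mul_assoc]
    constructor
    · intro hodd
      have : Even t.length := by
        simp only [List.length_cons, Nat.odd_iff, Nat.even_iff] at hodd ⊢; omega
      rw [key, ihe this, List.prod_cons, mul_assoc]
    · intro heven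
      have : Odd t.length := by
        simp only [List.length_cons, Nat.odd_iff, Nat.even_iff] at heven ⊢; omega
      rw [key, iho this, List.prod_cons, mul_neg, neg_neg, mul_assoc]

lemma lemMem (hanti : ∀ a b, P a → P b → a * b = -(b * a))
    (hsq : ∀ a, P a → a * a = 0) :
    ∀ l : List A, (∀ x ∈ l, P x) → ∀ a, P a → a ∈ l → a * l.prod = 0 := by
  intro l
  induction l with
  | nil => intro _ a _ h; simp at h
  | cons b t ih =>
    intro hl a ha hmem
    have hb : P b := hl b (by simp)
    have ht : ∀ x ∈ t, P x := fun x hx => hl x (by simp [hx])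
    rw [List.prod_cons, ← mul_assoc]
    rcases List.mem_cons.mp hmem with rfl | hmem'
    · rw [hsq a ha, zero_mul]
    · rw [hanti a b ha hb, neg_mul, mul_assoc, ih ht a ha hmem', mul_zero, neg_zero]

lemma lemDup (hanti : ∀ a b, P a → P b → a * b = -(b * a))
    (hsq : ∀ a, P a → a * a = 0) :
    ∀ l : List A, (∀ x ∈ l, P x) → ∀ i j (hij : i < j) (hj : j < l.length),
      l[i]'(lt_trans hij hj) = l[j]'hj → l.prod = 0 := by
  intro l
  induction l with
  | nil => intro _ i j _ hj; simp at hj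
  | cons b t ih =>
    intro hl i j hij hj heq
    have hb : P b := hl b (by simp)
    have ht : ∀ x ∈ t, P x := fun x hx => hl x (by simp [hx])
    rw [List.prod_cons]
    match i, j with
    | 0, (j'+1) =>
      have : b = t[j']'(by simpa using hj) := by simpa using heq
      have hmem : b ∈ t := this ▸ List.getElem_mem _
      rw [lemMem hanti hsq t ht b hb hmem]
    | (i'+1), (j'+1) =>
      have : t.prod = 0 := ih ht i' j' (by omega) (by simpa using hj) (by simpa using heq)
      rw [this, mul_zero]

end aux

def edgesL {n : ℕ} {A : Type*} (C : Matrix (Fin n) (Fin n) A) :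
    Fin n → List (Fin n) → Fin n → List A
  | i, [], j => [C i j]
  | i, a :: l, j => C i a :: edgesL C a l j

lemma ofFn_fin_cons {α : Type*} {k : ℕ} (a : α) (g : Fin k → α) :
    List.ofFn (Fin.cons a g) = a :: List.ofFn g := by
  rw [List.ofFn_succ]
  simp [Fin.cons_zero, Fin.cons_succ]

lemma expandPow {A : Type*} [Ring A] {n : ℕ} (C : Matrix (Fin n) (Fin n) A) :
    ∀ (k : ℕ) (i j : Fin n),
      (C ^ (k+1)) i j = ∑ g : Fin k → Fin n, (edgesL C i (List.ofFn g) j).prod := by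
  intro k
  induction k with
  | zero =>
    intro i j
    rw [pow_one, Fintype.sum_unique]
    simp [edgesL, List.ofFn_zero]
  | succ k ih =>
    intro i j
    rw [pow_succ', Matrix.mul_apply]
    have step : ∀ l : Fin n, C i l * (C^(k+1)) l j
        = ∑ g : Fin k → Fin n, (edgesL C i (List.ofFn (Fin.cons l g)) j).prod := by
      intro l
      rw [ih l j, Finset.mul_sum]
      refine Finset.sum_congr rfl fun g _ => ?_
      rw [ofFn_fin_cons]
      show C i l * (edgesL C l (List.ofFn g) j).prod
        = (C i l :: edgesL C l (List.ofFn g) j).prod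
      rw [List.prod_cons]
    calc ∑ l : Fin n, C i l * (C^(k+1)) l j
        = ∑ l : Fin n, ∑ g : Fin k → Fin n,
            (edgesL C i (List.ofFn (Fin.cons l g)) j).prod := by
          exact Finset.sum_congr rfl fun l _ => step l
      _ = ∑ p : Fin n × (Fin k → Fin n),
            (edgesL C i (List.ofFn (Fin.cons p.1 p.2)) j).prod := by
          rw [Fintype.sum_prod_type]
      _ = ∑ g : Fin (k+1) → Fin n, (edgesL C i (List.ofFn g) j).prod := by
          exact Equiv.sum_comp (Fin.consEquiv (fun _ => Fin n))
            (fun g => (edgesL C i (List.ofFn g) j).prod)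

lemma traceExpand {A : Type*} [Ring A] {n : ℕ} (C : Matrix (Fin n) (Fin n) A) (N : ℕ) :
    Matrix.trace (C ^ (N+1))
      = ∑ f : Fin (N+1) → Fin n,
          (edgesL C (f 0) (List.ofFn (Fin.tail f)) (f 0)).prod := by
  have h1 : Matrix.trace (C ^ (N+1)) = ∑ i : Fin n, (C ^ (N+1)) i i := rfl
  rw [h1]
  calc ∑ i : Fin n, (C ^ (N+1)) i i
      = ∑ i : Fin n, ∑ g : Fin N → Fin n, (edgesL C i (List.ofFn g) i).prod := by
        exact Finset.sum_congr rfl fun i _ => expandPow C N i i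
    _ = ∑ p : Fin n × (Fin N → Fin n), (edgesL C p.1 (List.ofFn p.2) p.1).prod := by
        rw [Fintype.sum_prod_type]
    _ = ∑ f : Fin (N+1) → Fin n,
          (edgesL C (f 0) (List.ofFn (Fin.tail f)) (f 0)).prod := by
        refine Eq.trans ?_ (Equiv.sum_comp (Fin.consEquiv (fun _ => Fin n))
          (fun f => (edgesL C (f 0) (List.ofFn (Fin.tail f)) (f 0)).prod))
        refine Finset.sum_congr rfl fun p _ => ?_
        simp [Fin.consEquiv, Fin.tail_cons, Fin.cons_zero]

lemma edgesL_ofFn_tail {A : Type*} {n : ℕ} (C : Matrix (Fin n) (Fin n) A) :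
    ∀ (N : ℕ) (h : Fin (N+1) → Fin n) (j : Fin n),
      edgesL C (h 0) (List.ofFn (Fin.tail h)) j
        = List.ofFn (fun t : Fin (N+1) => C (h t) ((Fin.snoc (Fin.tail h) j : Fin (N+1) → Fin n) t)) := by
  intro N
  induction N with
  | zero =>
    intro h j
    rw [List.ofFn_zero, List.ofFn_succ, List.ofFn_zero]
    simp [edgesL, Fin.snoc]
  | succ N ih =>
    intro h j
    have htail : List.ofFn (Fin.tail h) = h 1 :: List.ofFn (Fin.tail (Fin.tail h)) := by
      rw [List.ofFn_succ]
      congr 1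
    rw [htail]
    show C (h 0) (h 1) :: edgesL C (h 1) (List.ofFn (Fin.tail (Fin.tail h))) j = _
    have h10 : h 1 = (Fin.tail h) 0 := rfl
    rw [List.ofFn_succ]
    refine congrArg₂ List.cons ?_ ?_
    · -- heads
      congr 1
    · -- tails
      rw [h10, ih (Fin.tail h) j]
      refine congrArg _ (funext fun t => ?_)
      have hsnoc : (Fin.snoc (Fin.tail (Fin.tail h)) j : Fin (N+1) → Fin n) t
          = (Fin.snoc (Fin.tail h) j : Fin (N+2) → Fin n) t.succ := by
        refine Fin.lastCases ?_ (fun u => ?_) t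
        · rw [Fin.snoc_last]
          rw [show (Fin.last N).succ = Fin.last (N+1) from rfl]
          rw [Fin.snoc_last]
        · rw [Fin.snoc_castSucc, Fin.succ_castSucc, Fin.snoc_castSucc]
          rfl
      rw [hsnoc]
      rfl

lemma edges_cyclic {A : Type*} {n N : ℕ} (C : Matrix (Fin n) (Fin n) A)
    (f : Fin (N+1) → Fin n) :
    edgesL C (f 0) (List.ofFn (Fin.tail f)) (f 0)
      = List.ofFn (fun t : Fin (N+1) => C (f t) (f (t+1))) := by
  rw [edgesL_ofFn_tail]
  refine congrArg _ (funext fun t => ?_)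
  congr 1
  refine Fin.lastCases ?_ (fun u => ?_) t
  · rw [Fin.snoc_last, Fin.last_add_one]
  · rw [Fin.snoc_castSucc, Fin.coeSucc_eq_succ]
    rfl

lemma trace_even_pow_zero {A : Type*} [Ring A] {P : A → Prop}
    (hanti : ∀ a b, P a → P b → a * b = -(b * a))
    (hsq : ∀ a, P a → a * a = 0)
    {n : ℕ} (C : Matrix (Fin n) (Fin n) A) (hC : ∀ i j, P (C i j))
    (M : ℕ) (hM : Odd M) :
    Matrix.trace (C ^ (M+1)) = 0 := by
  classical
  have hM1 : 1 ≤ M := hM.pos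
  rw [traceExpand C M]
  have hconv : ∀ f : Fin (M+1) → Fin n,
      (edgesL C (f 0) (List.ofFn (Fin.tail f)) (f 0)).prod
        = (List.ofFn (fun t : Fin (M+1) => C (f t) (f (t+1)))).prod := by
    intro f; rw [edges_cyclic]
  rw [Finset.sum_congr rfl fun f _ => hconv f]
  set term : (Fin (M+1) → Fin n) → A :=
    fun f => (List.ofFn (fun t : Fin (M+1) => C (f t) (f (t+1)))).prod with hterm
  -- edge data
  set E : (Fin (M+1) → Fin n) → Fin (M+1) → Fin n × Fin n :=
    fun f k => (f k, f (k+1)) with hE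
  have henc : Function.Injective (fun p : Fin n × Fin n => p.1.val * n + p.2.val) := by
    intro p q h
    simp only at h
    have hp2 := p.2.isLt
    have hq2 := q.2.isLt
    have hn : 0 < n := lt_of_le_of_lt (Nat.zero_le _) hp2
    have h2 : p.2.val = q.2.val := by
      have e1 : (p.1.val * n + p.2.val) % n = p.2.val := by
        rw [Nat.mul_comm p.1.val n, Nat.mul_add_mod, Nat.mod_eq_of_lt hp2]
      have e2 : (q.1.val * n + q.2.val) % n = q.2.val := by
        rw [Nat.mul_comm q.1.val n, Nat.mul_add_mod, Nat.mod_eq_of_lt hq2]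
      rw [← e1, ← e2, h]
    have h1 : p.1.val = q.1.val := by
      have : p.1.val * n = q.1.val * n := by omega
      exact Nat.eq_of_mul_eq_mul_right hn this
    exact Prod.ext (Fin.ext h1) (Fin.ext h2)
  set V : (Fin (M+1) → Fin n) → Fin (M+1) → ℕ :=
    fun f k => (E f k).1.val * n + (E f k).2.val with hV
  have exmin : ∀ f : Fin (M+1) → Fin n, ∃ k, ∀ k', V f k ≤ V f k' := by
    intro f
    obtain ⟨k, -, hk⟩ := Finset.exists_min_image Finset.univ (V f) ⟨0, Finset.mem_univ 0⟩
    exact ⟨k, fun k' => hk k' (Finset.mem_univ k')⟩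
  set K : (Fin (M+1) → Fin n) → Fin (M+1) := fun f => Classical.choose (exmin f) with hKdef
  have hK : ∀ f k', V f (K f) ≤ V f k' := fun f => Classical.choose_spec (exmin f)
  set ρ : (Fin (M+1) → Fin n) → (Fin (M+1) → Fin n) := fun f k => f (k+1) with hρ
  set ρi : (Fin (M+1) → Fin n) → (Fin (M+1) → Fin n) := fun f k => f (k-1) with hρi
  have hρρi : ∀ f, ρ (ρi f) = f := by
    intro f; funext k; show f (k + 1 - 1) = f k; rw [add_sub_cancel_right]
  have hρiρ : ∀ f, ρi (ρ f) = f := by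
    intro f; funext k; show f (k - 1 + 1) = f k; rw [sub_add_cancel]
  -- sign lemma
  have hsign : ∀ f, term f = - term (ρ f) := by
    intro f
    have hsplit : term f
        = C (f 0) (f (0+1)) * (List.ofFn (fun u : Fin M => C (f u.succ) (f (u.succ+1)))).prod := by
      show (List.ofFn (fun t : Fin (M+1) => C (f t) (f (t+1)))).prod = _
      rw [List.ofFn_succ, List.prod_cons]
    have hsplit2 : term (ρ f)
        = (List.ofFn (fun u : Fin M => C (f u.succ) (f (u.succ+1)))).prod * C (f 0) (f (0+1)) := by
      show (List.ofFn (fun t : Fin (M+1) => C ((ρ f) t) ((ρ f) (t+1)))).prod = _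
      rw [List.ofFn_succ', List.prod_concat]
      congr 1
      · refine congrArg List.prod (congrArg List.ofFn (funext fun u => ?_))
        show C (f (u.castSucc + 1)) (f (u.castSucc + 1 + 1)) = _
        rw [Fin.coeSucc_eq_succ]
      · show C (f (Fin.last M + 1)) (f (Fin.last M + 1 + 1)) = C (f 0) (f (0+1))
        rw [Fin.last_add_one]
    have hmem : ∀ x ∈ List.ofFn (fun u : Fin M => C (f u.succ) (f (u.succ+1))), P x := by
      intro x hx
      rw [List.mem_ofFn] at hx
      obtain ⟨u, rfl⟩ := hx
      exact hC _ _
    have hlen : Odd (List.ofFn (fun u : Fin M => C (f u.succ) (f (u.succ+1)))).length := by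
      rw [List.length_ofFn]; exact hM
    have := (lemSwap hanti _ hmem (C (f 0) (f (0+1))) (hC _ _)).1 hlen
    rw [hsplit, hsplit2, this]
  -- zero lemma
  have hzero : ∀ f, ¬ Function.Injective (E f) → term f = 0 := by
    intro f hfI
    show (List.ofFn (fun t : Fin (M+1) => C (f t) (f (t+1)))).prod = 0
    rw [Function.not_injective_iff] at hfI
    obtain ⟨k, k', hEkk, hkk⟩ := hfI
    rcases Ne.lt_or_gt (Fin.val_ne_of_ne hkk) with hlt | hlt
    · refine lemDup hanti hsq _ ?_ k.val k'.val hlt (by simp [List.length_ofFn]; exact Nat.le_of_lt_succ k'.isLt) ?_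
      · intro x hx; rw [List.mem_ofFn] at hx; obtain ⟨u, rfl⟩ := hx; exact hC _ _
      · rw [List.getElem_ofFn, List.getElem_ofFn]
        have e1 : (⟨k.val, by simpa using k.isLt⟩ : Fin (M+1)) = k := by ext; rfl
        have e2 : (⟨k'.val, by simpa using k'.isLt⟩ : Fin (M+1)) = k' := by ext; rfl
        rw [e1, e2]
        have h1 : f k = f k' := congrArg Prod.fst hEkk
        have h2 : f (k+1) = f (k'+1) := congrArg Prod.snd hEkk
        rw [h1, h2]
    · refine lemDup hanti hsq _ ?_ k'.val k.val hlt (by simp [List.length_ofFn]; exact Nat.le_of_lt_succ k.isLt) ?_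
      · intro x hx; rw [List.mem_ofFn] at hx; obtain ⟨u, rfl⟩ := hx; exact hC _ _
      · rw [List.getElem_ofFn, List.getElem_ofFn]
        have e1 : (⟨k.val, by simpa using k.isLt⟩ : Fin (M+1)) = k := by ext; rfl
        have e2 : (⟨k'.val, by simpa using k'.isLt⟩ : Fin (M+1)) = k' := by ext; rfl
        rw [e1, e2]
        have h1 : f k = f k' := congrArg Prod.fst hEkk
        have h2 : f (k+1) = f (k'+1) := congrArg Prod.snd hEkk
        rw [h1, h2]
  -- transport of E along rotations
  have hEρ : ∀ f k, E (ρ f) k = E f (k+1) := by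
    intro f k
    show ((ρ f) k, (ρ f) (k+1)) = (f (k+1), f (k+1+1))
    rfl
  have hEρi : ∀ f k, E (ρi f) k = E f (k-1) := by
    intro f k
    show ((ρi f) k, (ρi f) (k+1)) = (f (k-1), f (k-1+1))
    show (f (k-1), f (k+1-1)) = (f (k-1), f (k-1+1))
    rw [add_sub_cancel_right, sub_add_cancel]
  have hInjρ : ∀ f, Function.Injective (E f) → Function.Injective (E (ρ f)) := by
    intro f hf
    have : E (ρ f) = fun k => E f (k+1) := funext (hEρ f)
    rw [this]
    exact fun a b hab => by
      have := hf hab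
      exact add_left_injective 1 this
  have hInjρi : ∀ f, Function.Injective (E f) → Function.Injective (E (ρi f)) := by
    intro f hf
    have : E (ρi f) = fun k => E f (k-1) := funext (hEρi f)
    rw [this]
    exact fun a b hab => by
      have := hf hab
      have h2 : a - 1 + 1 = b - 1 + 1 := by rw [this]
      rwa [sub_add_cancel, sub_add_cancel] at h2
  have hVρ : ∀ f k, V (ρ f) k = V f (k+1) := by
    intro f k; simp only [hV, hEρ f k]
  have hVρi : ∀ f k, V (ρi f) k = V f (k-1) := by
    intro f k; simp only [hV, hEρi f k, add_sub_cancel_right, sub_add_cancel]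
  -- uniqueness of argmin
  have huniq : ∀ f, Function.Injective (E f) → ∀ k, (∀ k', V f k ≤ V f k') → k = K f := by
    intro f hf k hk
    have h1 := hK f k
    have h2 := hk (K f)
    have hVeq : V f k = V f (K f) := le_antisymm h2 h1
    have : E f k = E f (K f) := henc hVeq
    exact hf this
  have hKρ : ∀ f, Function.Injective (E f) → K (ρ f) = K f - 1 := by
    intro f hf
    refine (huniq (ρ f) (hInjρ f hf) (K f - 1) ?_).symm
    intro k'
    rw [hVρ, hVρ, sub_add_cancel]
    exact hK f (k' + 1)
  have hKρi : ∀ f, Function.Injective (E f) → K (ρi f) = K f + 1 := by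
    intro f hf
    refine (huniq (ρi f) (hInjρi f hf) (K f + 1) ?_).symm
    intro k'
    rw [hVρi, hVρi, add_sub_cancel_right]
    exact hK f (k' - 1)
  -- parity flip
  have hpar : ∀ k : Fin (M+1), Even ((k+1) : Fin (M+1)).val ↔ ¬ Even k.val := by
    intro k
    rw [Fin.val_add_one]
    by_cases hk : k = Fin.last M
    · subst hk
      simp only [if_pos rfl, Fin.val_last]
      simp [Nat.not_even_iff_odd.mpr hM]
    · rw [if_neg hk]
      exact Nat.even_add_one
  -- the involution
  set g : (Fin (M+1) → Fin n) → (Fin (M+1) → Fin n) :=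
    fun f => if Function.Injective (E f) then (if Even (K f).val then ρ f else ρi f) else f
    with hg
  have h01 : (0 : Fin (M+1)) ≠ 1 := by
    intro h
    have hv : (0 : Fin (M+1)).val = (1 : Fin (M+1)).val := congrArg Fin.val h
    rw [Fin.val_zero, Fin.val_one'] at hv
    rw [Nat.mod_eq_of_lt (by omega)] at hv
    omega
  have hgne : ∀ f, Function.Injective (E f) → ρ f ≠ f ∧ ρi f ≠ f := by
    intro f hf
    have hne : ρ f ≠ f := by
      intro h
      have : E f 0 = E f 1 := by
        have h1 : E (ρ f) 0 = E f 0 := by rw [h]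
        rw [hEρ f 0, zero_add] at h1
        exact h1.symm
      exact h01 (hf this)
    refine ⟨hne, fun h => hne ?_⟩
    rw [← h, hρρi f]
    rw [h]
  have hgg : ∀ f, g (g f) = f := by
    intro f
    by_cases hf : Function.Injective (E f)
    · by_cases hp : Even (K f).val
      · have e1 : g f = ρ f := by simp only [hg, if_pos hf, if_pos hp]
        rw [e1]
        have hfρ := hInjρ f hf
        have hKp : ¬ Even (K (ρ f)).val := by
          rw [hKρ f hf]
          exact (hpar _).mp (by rw [sub_add_cancel]; exact hp)
        simp only [hg, if_pos hfρ, if_neg hKp]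
        exact hρiρ f
      · have e1 : g f = ρi f := by simp only [hg, if_pos hf, if_neg hp]
        rw [e1]
        have hfρi := hInjρi f hf
        have hKp : Even (K (ρi f)).val := by
          rw [hKρi f hf]
          exact (hpar (K f)).mpr hp
        simp only [hg, if_pos hfρi, if_pos hKp]
        exact hρρi f
    · have e1 : g f = f := by simp only [hg, if_neg hf]
      rw [e1, e1]
  refine Finset.sum_involution (fun f _ => g f) ?_ ?_ (fun f _ => Finset.mem_univ _)
    (fun f _ => hgg f)
  · -- sum of pairs is zero
    intro f _
    show term f + term (g f) = 0
    by_cases hf : Function.Injective (E f)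
    · by_cases hp : Even (K f).val
      · have e1 : g f = ρ f := by simp only [hg, if_pos hf, if_pos hp]
        rw [e1, hsign f]
        exact neg_add_cancel _
      · have e1 : g f = ρi f := by simp only [hg, if_pos hf, if_neg hp]
        rw [e1]
        have h2 := hsign (ρi f)
        rw [hρρi f] at h2
        rw [h2]
        exact add_neg_cancel _
    · have e1 : g f = f := by simp only [hg, if_neg hf]
      rw [e1, hzero f hf, add_zero]
  · -- no fixed points where term nonzero
    intro f _ hterm0
    show g f ≠ f
    by_cases hf : Function.Injective (E f)
    · obtain ⟨h1, h2⟩ := hgne f hf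
      by_cases hp : Even (K f).val
      · have e1 : g f = ρ f := by simp only [hg, if_pos hf, if_pos hp]
        rw [e1]; exact h1
      · have e1 : g f = ρi f := by simp only [hg, if_pos hf, if_neg hp]
        rw [e1]; exact h2
    · exact absurd (hzero f hf) hterm0

/-- In a supercommutative ring `Λ = Λ₀ ⊕ Λ₁`, if `s` is an odd derivation and `C` an n×n
matrix with odd entries such that `s C = C²` entrywise, then the odd traces are `s`-closed:
`s (tr (C^(2m-1))) = 0` for all `m ≥ 1`. -/
theorem stmt_3 {Λ : Type*} [Ring Λ] (Λ₀ Λ₁ : AddSubgroup Λ)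
    (hcentral : ∀ a ∈ Λ₀, ∀ b : Λ, a * b = b * a)
    (hanti : ∀ a ∈ Λ₁, ∀ b ∈ Λ₁, a * b = -(b * a))
    (hsq : ∀ a ∈ Λ₁, a * a = 0)
    (hdecomp : ∀ x : Λ, ∃ a ∈ Λ₀, ∃ b ∈ Λ₁, x = a + b)
    (hdisj : Λ₀ ⊓ Λ₁ = ⊥)
    (s : Λ →+ Λ)
    (hodd0 : ∀ a ∈ Λ₀, s a ∈ Λ₁)
    (hodd1 : ∀ a ∈ Λ₁, s a ∈ Λ₀)
    (hleib0 : ∀ a ∈ Λ₀, ∀ b : Λ, s (a * b) = s a * b + a * s b)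
    (hleib1 : ∀ a ∈ Λ₁, ∀ b : Λ, s (a * b) = s a * b - a * s b)
    {n : ℕ} (C : Matrix (Fin n) (Fin n) Λ)
    (hC : ∀ i j, C i j ∈ Λ₁)
    (hsC : ∀ i j, s (C i j) = (C * C) i j) :
    ∀ m : ℕ, 1 ≤ m → s (Matrix.trace (C ^ (2 * m - 1))) = 0 := by
  intro m hm
  obtain ⟨m', rfl⟩ : ∃ m', m = m' + 1 := ⟨m - 1, by omega⟩
  have hexp : 2 * (m' + 1) - 1 = 2 * m' + 1 := by omega
  rw [hexp]
  -- the derivation sends entries of odd powers to entries of the next power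
  have hA : ∀ k : ℕ, ∀ i j, s ((C ^ (2*k+1)) i j) = (C ^ (2*k+2)) i j := by
    intro k
    induction k with
    | zero =>
      intro i j
      rw [show (2*0+1 : ℕ) = 1 from by norm_num, show (2*0+2 : ℕ) = 2 from by norm_num,
        pow_one, hsC i j, pow_two]
    | succ k ih =>
      have hB : ∀ i j, s ((C ^ (2*k+2)) i j) = 0 := by
        intro i j
        have hpow : (C ^ (2*k+2)) i j = ∑ l, C i l * (C ^ (2*k+1)) l j := by
          rw [show (2*k+2) = (2*k+1)+1 from rfl, pow_succ', Matrix.mul_apply]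
        rw [hpow, map_sum]
        have hterm : ∀ l, s (C i l * (C ^ (2*k+1)) l j)
            = (C*C) i l * (C ^ (2*k+1)) l j - C i l * ((C ^ (2*k+2)) l j) := by
          intro l
          rw [hleib1 (C i l) (hC i l), hsC i l, ih l j]
        rw [Finset.sum_congr rfl fun l _ => hterm l, Finset.sum_sub_distrib]
        have e1 : ∑ l, (C*C) i l * (C ^ (2*k+1)) l j = ((C*C) * C^(2*k+1)) i j :=
          (Matrix.mul_apply).symm
        have e2 : ∑ l, C i l * (C ^ (2*k+2)) l j = (C * C^(2*k+2)) i j :=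
          (Matrix.mul_apply).symm
        have e3 : (C*C) * C^(2*k+1) = C * C^(2*k+2) := by
          rw [show C ^ (2*k+2) = C * C^(2*k+1) from by rw [← pow_succ'], mul_assoc]
        rw [e1, e2, e3, sub_self]
      intro i j
      have hpow : (C ^ (2*(k+1)+1)) i j = ∑ l, C i l * (C ^ (2*k+2)) l j := by
        rw [show (2*(k+1)+1) = (2*k+2)+1 from by ring, pow_succ', Matrix.mul_apply]
      rw [hpow, map_sum]
      have hterm : ∀ l, s (C i l * (C ^ (2*k+2)) l j)
          = (C*C) i l * (C ^ (2*k+2)) l j := by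
        intro l
        rw [hleib1 (C i l) (hC i l), hsC i l, hB l j, mul_zero, sub_zero]
      rw [Finset.sum_congr rfl fun l _ => hterm l]
      have e1 : ∑ l, (C*C) i l * (C ^ (2*k+2)) l j = ((C*C) * C^(2*k+2)) i j :=
        (Matrix.mul_apply).symm
      rw [e1]
      have e3 : (C*C) * C^(2*k+2) = C ^ (2*(k+1)+2) := by
        rw [← pow_two, ← pow_add]
        congr 1
        ring
      rw [e3]
  have htr : s (Matrix.trace (C ^ (2*m'+1))) = Matrix.trace (C ^ (2*m'+2)) := by
    have t1 : Matrix.trace (C ^ (2*m'+1)) = ∑ i, (C ^ (2*m'+1)) i i := rfl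
    have t2 : Matrix.trace (C ^ (2*m'+2)) = ∑ i, (C ^ (2*m'+2)) i i := rfl
    rw [t1, t2, map_sum]
    exact Finset.sum_congr rfl fun i _ => hA m' i i
  rw [htr, show (2*m'+2) = (2*m'+1)+1 from rfl]
  exact trace_even_pow_zero (P := fun a => a ∈ Λ₁)
    (fun a b ha hb => hanti a ha b hb) (fun a ha => hsq a ha) C hC
    (2*m'+1) ⟨m', by ring⟩
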